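/- Let λ = (λ₀ ≥ λ₁ ≥ … ≥ λ_n ≥ λ_{n+1} = 0) be a partition. For each index i ∈ {0,…,n} such that λ_i − 1 ≥ λ_{i+1}, let λ^i denote the derivative partition of λ at the i-th position, obtained from λ by replacing λ_i with λ_i − 1. Then ∂F_λ/∂t₁ + ∑_i F_{λ^i} = 0, where the sum is over all indices i ∈ {0,…,n} with λ_i − 1 ≥ λ_{i+1}. -/

import Mathlib

open MvPolynomial

/-- The polynomials `h_i(t₁,t₂,…)` defined by `exp(−∑_{j≥1} t_j z^j) = ∑_{i≥0} h_i z^i`.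
Here the variable `X j : MvPolynomial ℕ ℚ` stands for `t_{j+1}`.  This is the unique
solution of the recursion obtained by differentiating the generating identity in `z`:
`(i+1)·h_{i+1} = −∑_{j=1}^{i+1} j·t_j·h_{i+1−j}`, together with `h_0 = 1`. -/
noncomputable def hSeq : ℕ → MvPolynomial ℕ ℚ
  | 0 => 1
  | i + 1 =>
      (-(((i : ℚ) + 1)))⁻¹ •
        ∑ j ∈ Finset.range (i + 1), (((j : ℚ) + 1)) • (MvPolynomial.X j * hSeq (i - j))
decreasing_by exact Nat.lt_succ_of_le (Nat.sub_le i j)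

/-- `h_n` for `n : ℤ`, with `h_n := 0` for `n < 0`. -/
noncomputable def hInt (n : ℤ) : MvPolynomial ℕ ℚ :=
  if 0 ≤ n then hSeq n.toNat else 0

/-- The Schur polynomial of a partition `lam` (a weakly decreasing, eventually zero
sequence of nonnegative integers): `F_λ = det_{i,j=0}^{n} (h_{λ_i − i + j})`, where
`n` is the least index with `λ_j = 0` for all `j > n`. -/
noncomputable def schurOf (lam : ℕ → ℕ) : MvPolynomial ℕ ℚ :=
  Matrix.det (Matrix.of fun i j : Fin (sInf {n : ℕ | ∀ m : ℕ, n < m → lam m = 0} + 1) =>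
    hInt ((lam i : ℤ) - (i : ℤ) + (j : ℤ)))


open Finset

section aux

lemma hSeq_succ (i : ℕ) : hSeq (i+1) = (-(((i : ℚ) + 1)))⁻¹ •
    ∑ j ∈ Finset.range (i + 1), (((j : ℚ) + 1)) • (MvPolynomial.X j * hSeq (i - j)) := by
  rw [hSeq]

lemma hInt_coe (k : ℕ) : hInt (k : ℤ) = hSeq k := by simp [hInt]

lemma hInt_neg {m : ℤ} (h : m < 0) : hInt m = 0 := if_neg (not_le.mpr h)

lemma pderiv_hSeq (k : ℕ) : pderiv (0:ℕ) (hSeq k) = -hInt ((k:ℤ)-1) := by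
  induction k using Nat.strong_induction_on with
  | _ k ih =>
  match k with
  | 0 =>
    rw [show hSeq 0 = 1 from by rw [hSeq], hInt_neg (by norm_num)]
    simp
  | (i+1) =>
    have key : ∀ j ∈ Finset.range (i+1),
        pderiv (0:ℕ) (((j:ℚ)+1) • (X j * hSeq (i-j)))
          = ((j:ℚ)+1) • ((if j = 0 then hSeq i else 0) + X j * (-hInt ((i:ℤ)-j-1))) := by
      intro j hj
      have hj' : j ≤ i := Nat.lt_succ_iff.mp (Finset.mem_range.mp hj)
      have h1 : pderiv (0:ℕ) (X j : MvPolynomial ℕ ℚ) * hSeq (i-j)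
          = (if j = 0 then hSeq i else 0) := by
        rcases eq_or_ne j 0 with rfl|h
        · simp
        · simp [pderiv_X_of_ne h, h]
      have h2 : (((i-j:ℕ):ℤ) - 1) = (i:ℤ)-j-1 := by omega
      rw [Derivation.map_smul, pderiv_mul, ih (i-j) (by omega), h2, h1]
    have e1 : ∑ j ∈ Finset.range (i+1), ((j:ℚ)+1) • (if j = 0 then hSeq i else 0) = hSeq i := by
      rw [Finset.sum_eq_single_of_mem 0 (by simp)]
      · simp
      · intro b _ hb; simp [hb]
    have eS : ∑ j ∈ Finset.range (i+1), ((j:ℚ)+1) • (X j * hInt ((i:ℤ)-j-1))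
        = (-(i:ℚ)) • hSeq i := by
      rcases Nat.eq_zero_or_pos i with rfl|hi
      · simp [hInt_neg (show ((0:ℕ):ℤ)-((0:ℕ):ℤ)-1 < 0 by norm_num),
          hInt_neg (show (-1:ℤ) < 0 by norm_num)]
      · obtain ⟨i', rfl⟩ : ∃ i', i = i'+1 := ⟨i-1, by omega⟩
        rw [Finset.sum_range_succ]
        have hterm : ∀ j ∈ Finset.range (i'+1),
            ((j:ℚ)+1) • (X j * hInt (((i'+1:ℕ):ℤ)-j-1))
              = ((j:ℚ)+1) • (X j * hSeq (i'-j)) := by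
          intro j hj
          have : ((i'+1:ℕ):ℤ)-j-1 = ((i'-j : ℕ) : ℤ) := by
            have := Nat.lt_succ_iff.mp (Finset.mem_range.mp hj); omega
          rw [this, hInt_coe]
        rw [Finset.sum_congr rfl hterm,
          hInt_neg (by omega : ((i'+1:ℕ):ℤ) - ((i'+1:ℕ):ℤ) - 1 < 0)]
        have hne : (-((i':ℚ)+1)) ≠ 0 := by
          have : ((i':ℚ)+1) > 0 := by positivity
          simp only [ne_eq, neg_eq_zero]; linarith
        have hT : ∑ j ∈ Finset.range (i'+1), ((j:ℚ)+1) • (X j * hSeq (i'-j))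
            = (-((i':ℚ)+1)) • hSeq (i'+1) := by
          rw [hSeq_succ, smul_inv_smul₀ hne]
        rw [hT]
        simp only [mul_zero, smul_zero, add_zero]
        congr 1
        push_cast
        ring
    rw [hSeq_succ, Derivation.map_smul, map_sum, Finset.sum_congr rfl key]
    have split : ∑ j ∈ Finset.range (i+1),
        ((j:ℚ)+1) • ((if j = 0 then hSeq i else 0) + X j * (-hInt ((i:ℤ)-j-1)))
          = ((i:ℚ)+1) • hSeq i := by
      simp only [smul_add, Finset.sum_add_distrib, mul_neg, smul_neg, Finset.sum_neg_distrib]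
      rw [e1, eS]
      module
    rw [split, smul_smul]
    have hne : ((i:ℚ)+1) ≠ 0 := by positivity
    rw [show (-((i:ℚ)+1))⁻¹ * ((i:ℚ)+1) = -1 from by rw [inv_neg, neg_mul, inv_mul_cancel₀ hne],
      show ((i+1:ℕ):ℤ)-1 = ((i:ℕ):ℤ) from by push_cast; ring, hInt_coe]
    simp

lemma pderiv_hInt (m : ℤ) : pderiv (0:ℕ) (hInt m) = -hInt (m-1) := by
  rcases le_or_gt 0 m with h|h
  · obtain ⟨k, rfl⟩ := Int.eq_ofNat_of_zero_le h
    rw [hInt_coe, pderiv_hSeq]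
  · rw [hInt_neg h, hInt_neg (by omega), map_zero, neg_zero]

lemma pderiv_prod {ι : Type*} [DecidableEq ι] (s : Finset ι) (f : ι → MvPolynomial ℕ ℚ) :
    pderiv 0 (∏ i ∈ s, f i) = ∑ i ∈ s, pderiv 0 (f i) * ∏ j ∈ s.erase i, f j := by
  induction s using Finset.induction with
  | empty => simp
  | insert a s hx ih =>
    have key : ∀ x ∈ s, pderiv (0:ℕ) (f x) * ∏ j ∈ (insert a s).erase x, f j
        = f a * (pderiv 0 (f x) * ∏ j ∈ s.erase x, f j) := fun x hx' => by
      rw [Finset.erase_insert_of_ne (by rintro rfl; exact hx hx'),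
        Finset.prod_insert (fun h => hx (Finset.mem_of_mem_erase h))]
      ring
    rw [Finset.prod_insert hx, pderiv_mul, ih, Finset.sum_insert hx, Finset.erase_insert hx,
      Finset.sum_congr rfl key, ← Finset.mul_sum]

lemma pderiv_det {m : ℕ} (A : Matrix (Fin m) (Fin m) (MvPolynomial ℕ ℚ)) :
    pderiv 0 A.det = ∑ k, (A.updateRow k (fun j => pderiv 0 (A k j))).det := by
  simp only [Matrix.det_apply', map_sum]
  rw [Finset.sum_comm]
  refine Finset.sum_congr rfl fun σ _ => ?_
  rw [pderiv_mul, pderiv_prod]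
  have hε : pderiv (0:ℕ) (Equiv.Perm.sign σ : MvPolynomial ℕ ℚ) = 0 := by
    rcases Int.units_eq_one_or (Equiv.Perm.sign σ) with h | h <;> simp [h]
  rw [hε, zero_mul, zero_add, Finset.mul_sum]
  rw [← Equiv.sum_comp σ (fun k => (Equiv.Perm.sign σ : MvPolynomial ℕ ℚ) *
      ∏ i, (A.updateRow k fun j => pderiv 0 (A k j)) (σ i) i)]
  refine Finset.sum_congr rfl fun i₀ _ => ?_
  congr 1
  rw [← Finset.mul_prod_erase Finset.univ _ (Finset.mem_univ i₀)]
  congr 1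
  · simp [Matrix.updateRow_apply]
  · refine Finset.prod_congr rfl fun i hi => ?_
    rw [Matrix.updateRow_apply, if_neg]
    exact fun h => (Finset.mem_erase.mp hi).1 (σ.injective h)

noncomputable def Dmat (lam : ℕ → ℕ) (n : ℕ) : MvPolynomial ℕ ℚ :=
  Matrix.det (Matrix.of fun i j : Fin (n+1) => hInt ((lam i : ℤ) - (i : ℤ) + (j : ℤ)))

lemma Dmat_succ (lam : ℕ → ℕ) (n : ℕ) (h : lam (n+1) = 0) :
    Dmat lam (n+1) = Dmat lam n := by
  unfold Dmat
  rw [Matrix.det_succ_row _ (Fin.last (n+1))]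
  rw [Finset.sum_eq_single_of_mem (Fin.last (n+1)) (Finset.mem_univ _)]
  · have hentry : (Matrix.of fun i j : Fin (n+1+1) => hInt ((lam i : ℤ) - i + j))
        (Fin.last (n+1)) (Fin.last (n+1)) = 1 := by
      simp only [Matrix.of_apply, Fin.val_last, h]
      rw [show ((0:ℕ):ℤ) - ((n+1:ℕ):ℤ) + ((n+1:ℕ):ℤ) = ((0:ℕ):ℤ) from by push_cast; ring,
        hInt_coe]
      rw [hSeq]
    rw [hentry, mul_one]
    rw [Fin.val_last, show (-1 : MvPolynomial ℕ ℚ)^(n+1+(n+1)) = 1 from by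
      rw [show n+1+(n+1) = 2*(n+1) from by ring, pow_mul]; norm_num]
    rw [one_mul]
    congr 1
    ext i j
    simp [Fin.succAbove_last]
  · intro j _ hj
    have hj' : (j:ℕ) < n+1 := by
      rcases Fin.lt_or_eq_of_le (Fin.le_last j) with h'|h'
      · exact h'
      · exact absurd h' hj
    have : (Matrix.of fun i j : Fin (n+1+1) => hInt ((lam i : ℤ) - i + j))
        (Fin.last (n+1)) j = 0 := by
      simp only [Matrix.of_apply, Fin.val_last, h]
      exact hInt_neg (by push_cast; omega)
    rw [this, mul_zero, zero_mul]

lemma Dmat_eq (lam : ℕ → ℕ) {n m : ℕ} (h : ∀ k, n < k → lam k = 0) (hm : n ≤ m) :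
    Dmat lam m = Dmat lam n := by
  obtain ⟨k, rfl⟩ := Nat.exists_eq_add_of_le hm
  induction k with
  | zero => rfl
  | succ k ih =>
    rw [show n + (k+1) = (n+k) + 1 from by ring, Dmat_succ lam (n+k) (h _ (by omega))]
    exact ih (by omega)

end aux

theorem schur_derivative_identity (lam : ℕ → ℕ) (hlam : Antitone lam)
    (n : ℕ) (hn : ∀ j : ℕ, n < j → lam j = 0) :
    MvPolynomial.pderiv (0 : ℕ) (schurOf lam)
      + ∑ i ∈ (Finset.range (n + 1)).filter (fun i => lam (i + 1) + 1 ≤ lam i),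
          schurOf (Function.update lam i (lam i - 1))
      = 0 := by
  set S : Set ℕ := {n : ℕ | ∀ m : ℕ, n < m → lam m = 0} with hS
  set N : ℕ := sInf S with hN
  have hNmem : ∀ m, N < m → lam m = 0 := Nat.sInf_mem (⟨n, hn⟩ : S.Nonempty)
  have hNle : N ≤ n := Nat.sInf_le hn
  set A : Matrix (Fin (N+1)) (Fin (N+1)) (MvPolynomial ℕ ℚ) :=
    Matrix.of (fun i j : Fin (N+1) => hInt ((lam i : ℤ) - (i : ℤ) + (j : ℤ))) with hA
  have hschur : schurOf lam = A.det := rfl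
  set B : Fin (N+1) → Matrix (Fin (N+1)) (Fin (N+1)) (MvPolynomial ℕ ℚ) :=
    fun k => A.updateRow k (fun j => hInt ((lam k : ℤ) - 1 - (k : ℤ) + (j : ℤ))) with hB
  have hstep1 : pderiv (0:ℕ) A.det = ∑ k, -(B k).det := by
    rw [pderiv_det]
    refine Finset.sum_congr rfl fun k _ => ?_
    have hrow : (fun j => pderiv (0:ℕ) (A k j))
        = (-1 : MvPolynomial ℕ ℚ) • (fun j : Fin (N+1) => hInt ((lam k : ℤ) - 1 - k + j)) := by
      funext j
      simp only [hA, Matrix.of_apply, Pi.smul_apply, smul_eq_mul, neg_mul, one_mul]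
      rw [pderiv_hInt]
      congr 1
      ring
    rw [hrow, Matrix.det_updateRow_smul]
    simp [hB]
  have hBdet : ∀ k : Fin (N+1), (B k).det =
      if lam ((k:ℕ)+1) + 1 ≤ lam (k:ℕ) then
        schurOf (Function.update lam (k:ℕ) (lam (k:ℕ) - 1)) else 0 := by
    intro k
    have hBk' : B k = A.updateRow k (fun j => hInt ((lam (k:ℕ) : ℤ) - 1 - (k : ℤ) + (j : ℤ))) := rfl
    by_cases hc : lam ((k:ℕ)+1) + 1 ≤ lam (k:ℕ)
    · rw [if_pos hc]
      set lam' : ℕ → ℕ := Function.update lam (k:ℕ) (lam (k:ℕ) - 1) with hlam'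
      have hBk : B k = Matrix.of (fun i j : Fin (N+1) => hInt ((lam' i : ℤ) - i + j)) := by
        refine Matrix.ext fun i j => ?_
        rw [hBk', Matrix.updateRow_apply]
        by_cases hik : i = k
        · subst hik
          rw [if_pos rfl]
          simp only [Matrix.of_apply, hlam', Function.update_self]
          congr 1
          have : 1 ≤ lam (i:ℕ) := by omega
          push_cast [Nat.cast_sub this]
          ring
        · rw [if_neg hik]
          simp only [Matrix.of_apply, hA, hlam']
          rw [Function.update_of_ne (fun h => hik (Fin.val_injective h))]
      have hN'mem : ∀ m, N < m → lam' m = 0 := by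
        intro m hm
        rw [hlam', Function.update_of_ne (by omega : m ≠ (k:ℕ))]
        exact hNmem m hm
      have hsub : sInf {n : ℕ | ∀ m : ℕ, n < m → lam' m = 0} ≤ N :=
        Nat.sInf_le hN'mem
      have hvanish : ∀ m, sInf {n : ℕ | ∀ m : ℕ, n < m → lam' m = 0} < m → lam' m = 0 :=
        Nat.sInf_mem (⟨N, hN'mem⟩ : Set.Nonempty {n : ℕ | ∀ m : ℕ, n < m → lam' m = 0})
      have : schurOf lam' = Dmat lam' N := (Dmat_eq lam' hvanish hsub).symm
      rw [hBk, this]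
      rfl
    · rw [if_neg hc]
      rcases lt_or_eq_of_le (Nat.lt_succ_iff.mp k.isLt) with hk | hk
      · -- k < N : rows k and k+1 of B k coincide
        have heq : lam ((k:ℕ)+1) = lam (k:ℕ) :=
          le_antisymm (hlam (Nat.le_succ _)) (by omega)
        set k' : Fin (N+1) := ⟨(k:ℕ)+1, by omega⟩ with hk'
        have hkk' : k ≠ k' := by
          intro h
          have := congrArg Fin.val h
          simp [hk'] at this
        refine Matrix.det_zero_of_row_eq hkk' ?_
        funext j
        rw [hBk', Matrix.updateRow_self, Matrix.updateRow_ne (Ne.symm hkk')]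
        simp only [hA, Matrix.of_apply, hk']
        congr 1
        push_cast [heq]
        ring
      · -- k = N and lam N = 0 : row k of B k is zero
        have hlN : lam (k:ℕ) = 0 := by
          have : lam ((k:ℕ)+1) = 0 := hNmem _ (by omega)
          omega
        refine Matrix.det_eq_zero_of_row_eq_zero k ?_
        intro j
        rw [hBk', Matrix.updateRow_self, hlN]
        exact hInt_neg (by push_cast; omega)
  have hfilter : (Finset.range (n + 1)).filter (fun i => lam (i + 1) + 1 ≤ lam i)
      = (Finset.range (N + 1)).filter (fun i => lam (i + 1) + 1 ≤ lam i) := by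
    ext i
    simp only [Finset.mem_filter, Finset.mem_range]
    constructor
    · rintro ⟨hi, hcond⟩
      refine ⟨?_, hcond⟩
      by_contra h
      have : lam i = 0 := hNmem i (by omega)
      omega
    · rintro ⟨hi, hcond⟩
      exact ⟨by omega, hcond⟩
  rw [hschur, hstep1, hfilter]
  have : ∑ k : Fin (N+1), -(B k).det
      = -∑ i ∈ Finset.range (N+1), (if lam (i+1) + 1 ≤ lam i then
          schurOf (Function.update lam i (lam i - 1)) else 0) := by
    rw [← Finset.sum_neg_distrib, ← Fin.sum_univ_eq_sum_range]
    exact Finset.sum_congr rfl fun k _ => by rw [hBdet k]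
  rw [this, Finset.sum_filter]
  exact neg_add_cancel _
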